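/- arXiv:2406.07991 — 2 statements merged into one kernel-verified Lean document; each statement's English description precedes it below -/
import Mathlib

section
/- (Corollary, Equation 8: profitability condition for feature aggregation.) Let x : Fin D → Ω → ℝ and φ : Fin d → Ω → ℝ be two families of square-integrable mean-zero random variables (original and aggregated features) with invertible covariance matrices Σ_x and Σ_φ respectively, let f : Ω → ℝ be square-integrable and mean-zero with Var(f) > 0, let s ≥ 0 be the noise variance and n ≥ 2 the number of samples. Define the asymptotic mean squared errors MSE_D := (s/(n−1)) * D + E[ ( ∑_k (Σ_x⁻¹ *ᵥ c_x(f)) k * x k − f )² ] and MSE_d := (s/(n−1)) * d + E[ ( ∑_k (Σ_φ⁻¹ *ᵥ c_φ(f)) k * φ k − f )² ]. Then MSE_d ≤ MSE_D if and only if (s/(n−1)) * (D − d) ≥ Var(f) * (R²_D − R²_d), where R²_D := (c_x(f) ⬝ᵥ (Σ_x⁻¹ *ᵥ c_x(f)))/Var(f) and R²_d := (c_φ(f) ⬝ᵥ (Σ_φ⁻¹ *ᵥ c_φ(f)))/Var(f). -/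
open MeasureTheory ProbabilityTheory Matrix

/-- Covariance of two real random variables. -/
noncomputable def cov {Ω : Type*} [MeasurableSpace Ω] (μ : Measure Ω) (X Y : Ω → ℝ) : ℝ :=
  ∫ ω, (X ω - ∫ x, X x ∂μ) * (Y ω - ∫ x, Y x ∂μ) ∂μ


lemma memℒp_two_integrable_mul {Ω : Type*} [MeasurableSpace Ω] {μ : Measure Ω}
    {f g : Ω → ℝ} (hf : MemLp f 2 μ) (hg : MemLp g 2 μ) :
    Integrable (fun ω => f ω * g ω) μ := by
  refine (hf.integrable_sq.add hg.integrable_sq).mono' (hf.1.mul hg.1) ?_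
  filter_upwards with ω
  simp only [Pi.add_apply]
  rw [Real.norm_eq_abs, abs_mul]
  nlinarith [sq_nonneg (|f ω| - |g ω|), sq_abs (f ω), sq_abs (g ω),
    abs_nonneg (f ω), abs_nonneg (g ω)]

lemma key_mse {Ω : Type*} [MeasurableSpace Ω] (μ : Measure Ω)
    [IsProbabilityMeasure μ] {m : ℕ}
    (y : Fin m → Ω → ℝ) (hy : ∀ k, MemLp (y k) 2 μ)
    (hy0 : ∀ k, ∫ ω, y k ω ∂μ = 0)
    (S : Matrix (Fin m) (Fin m) ℝ) (hS : ∀ k j, S k j = cov μ (y k) (y j))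
    (hSinv : IsUnit S.det)
    (f : Ω → ℝ) (hf : MemLp f 2 μ) (hf0 : ∫ ω, f ω ∂μ = 0)
    (c : Fin m → ℝ) (hc : ∀ k, c k = cov μ (y k) f) :
    ∫ ω, (∑ k, (S⁻¹ *ᵥ c) k * y k ω - f ω) ^ 2 ∂μ
      = variance f μ - c ⬝ᵥ (S⁻¹ *ᵥ c) := by
  set w := S⁻¹ *ᵥ c with hw
  have hmul : ∀ k j : Fin m, Integrable (fun ω => y k ω * y j ω) μ :=
    fun k j => memℒp_two_integrable_mul (hy k) (hy j)
  have hmulf : ∀ k : Fin m, Integrable (fun ω => y k ω * f ω) μ :=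
    fun k => memℒp_two_integrable_mul (hy k) hf
  have hff : Integrable (fun ω => f ω * f ω) μ := memℒp_two_integrable_mul hf hf
  have hpt : ∀ ω, (∑ k, w k * y k ω - f ω) ^ 2
      = (∑ k, ∑ j, (w k * w j) * (y k ω * y j ω))
        - 2 * ∑ k, w k * (y k ω * f ω) + f ω * f ω := by
    intro ω
    have h1 : (∑ k, w k * y k ω) * (∑ j, w j * y j ω)
        = ∑ k, ∑ j, (w k * w j) * (y k ω * y j ω) := by
      rw [Finset.sum_mul_sum]
      exact Finset.sum_congr rfl fun k _ => Finset.sum_congr rfl fun j _ => by ring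
    have h2 : (∑ k, w k * y k ω) * f ω = ∑ k, w k * (y k ω * f ω) := by
      rw [Finset.sum_mul]
      exact Finset.sum_congr rfl fun k _ => by ring
    calc (∑ k, w k * y k ω - f ω) ^ 2
        = (∑ k, w k * y k ω) * (∑ j, w j * y j ω)
          - 2 * ((∑ k, w k * y k ω) * f ω) + f ω * f ω := by ring
      _ = _ := by rw [h1, h2]
  have hint1 : Integrable (fun ω => ∑ k, ∑ j, (w k * w j) * (y k ω * y j ω)) μ := by
    apply integrable_finset_sum; intro k _
    apply integrable_finset_sum; intro j _
    exact (hmul k j).const_mul _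
  have hint2 : Integrable (fun ω => 2 * ∑ k, w k * (y k ω * f ω)) μ := by
    apply Integrable.const_mul
    apply integrable_finset_sum; intro k _
    exact (hmulf k).const_mul _
  have hI1 : ∫ ω, (∑ k, ∑ j, (w k * w j) * (y k ω * y j ω)) ∂μ
      = ∑ k, ∑ j, (w k * w j) * S k j := by
    rw [integral_finset_sum _ fun k _ => integrable_finset_sum _
      fun j _ => (hmul k j).const_mul _]
    refine Finset.sum_congr rfl fun k _ => ?_
    rw [integral_finset_sum _ fun j _ => (hmul k j).const_mul _]
    refine Finset.sum_congr rfl fun j _ => ?_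
    rw [integral_const_mul, hS, cov]
    simp [hy0]
  have hI2 : ∫ ω, (2 * ∑ k, w k * (y k ω * f ω)) ∂μ = 2 * ∑ k, w k * c k := by
    rw [integral_const_mul, integral_finset_sum _ fun k _ => (hmulf k).const_mul _]
    congr 1
    refine Finset.sum_congr rfl fun k _ => ?_
    rw [integral_const_mul, hc, cov]
    simp [hy0, hf0]
  have hI3 : ∫ ω, f ω * f ω ∂μ = variance f μ := by
    rw [variance_eq_sub hf, hf0]
    simp [pow_two]
  have hquad : ∑ k, ∑ j, (w k * w j) * S k j = ∑ k, w k * c k := by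
    have hSw : S *ᵥ w = c := by
      rw [hw, Matrix.mulVec_mulVec, Matrix.mul_nonsing_inv S hSinv, Matrix.one_mulVec]
    calc ∑ k, ∑ j, (w k * w j) * S k j
        = ∑ k, w k * (S *ᵥ w) k := by
          refine Finset.sum_congr rfl fun k _ => ?_
          rw [Matrix.mulVec, dotProduct, Finset.mul_sum]
          exact Finset.sum_congr rfl fun j _ => by ring
      _ = ∑ k, w k * c k := by rw [hSw]
  have hdot : ∑ k, w k * c k = c ⬝ᵥ w := by
    rw [dotProduct]
    exact Finset.sum_congr rfl fun k _ => by ring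
  calc ∫ ω, (∑ k, w k * y k ω - f ω) ^ 2 ∂μ
      = ∫ ω, ((∑ k, ∑ j, (w k * w j) * (y k ω * y j ω))
        - 2 * ∑ k, w k * (y k ω * f ω) + f ω * f ω) ∂μ := by
        exact integral_congr_ae (Filter.Eventually.of_forall hpt)
    _ = (∑ k, ∑ j, (w k * w j) * S k j) - 2 * ∑ k, w k * c k + variance f μ := by
        rw [integral_add (f := fun ω => (∑ k, ∑ j, (w k * w j) * (y k ω * y j ω)) - 2 * ∑ k, w k * (y k ω * f ω)) (g := fun ω => f ω * f ω) (hint1.sub hint2) hff, integral_sub hint1 hint2, hI1, hI2, hI3]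
    _ = variance f μ - c ⬝ᵥ w := by rw [hquad, hdot]; ring

/-- Corollary (Equation 8): the aggregation of `D` features into `d < D` aggregated
ones is profitable in terms of asymptotic MSE of a linear model if and only if
`(s/(n-1)) * (D - d) ≥ Var(f) * (R²_D - R²_d)`. -/
theorem feature_aggregation_profitable {Ω : Type*} [MeasurableSpace Ω] (μ : Measure Ω)
    [IsProbabilityMeasure μ] {D d : ℕ} (hD : 0 < D) (hd : 0 < d)
    {n : ℕ} (hn : 2 ≤ n) {s : ℝ} (hs : 0 ≤ s)
    (x : Fin D → Ω → ℝ) (hx : ∀ k, MemLp (x k) 2 μ)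
    (hx0 : ∀ k, ∫ ω, x k ω ∂μ = 0)
    (φ : Fin d → Ω → ℝ) (hφ : ∀ k, MemLp (φ k) 2 μ)
    (hφ0 : ∀ k, ∫ ω, φ k ω ∂μ = 0)
    (Sx : Matrix (Fin D) (Fin D) ℝ) (hSx : ∀ k j, Sx k j = cov μ (x k) (x j))
    (hSxinv : IsUnit Sx.det)
    (Sφ : Matrix (Fin d) (Fin d) ℝ) (hSφ : ∀ k j, Sφ k j = cov μ (φ k) (φ j))
    (hSφinv : IsUnit Sφ.det)
    (f : Ω → ℝ) (hf : MemLp f 2 μ) (hf0 : ∫ ω, f ω ∂μ = 0)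
    (hfvar : 0 < variance f μ)
    (cx : Fin D → ℝ) (hcx : ∀ k, cx k = cov μ (x k) f)
    (cφ : Fin d → ℝ) (hcφ : ∀ k, cφ k = cov μ (φ k) f)
    (MSE_D MSE_d R2_D R2_d : ℝ)
    (hMSED : MSE_D = (s / ((n : ℝ) - 1)) * (D : ℝ)
      + ∫ ω, (∑ k, (Sx⁻¹ *ᵥ cx) k * x k ω - f ω) ^ 2 ∂μ)
    (hMSEd : MSE_d = (s / ((n : ℝ) - 1)) * (d : ℝ)
      + ∫ ω, (∑ k, (Sφ⁻¹ *ᵥ cφ) k * φ k ω - f ω) ^ 2 ∂μ)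
    (hR2D : R2_D = (cx ⬝ᵥ (Sx⁻¹ *ᵥ cx)) / variance f μ)
    (hR2d : R2_d = (cφ ⬝ᵥ (Sφ⁻¹ *ᵥ cφ)) / variance f μ) :
    MSE_d ≤ MSE_D ↔
      (s / ((n : ℝ) - 1)) * ((D : ℝ) - (d : ℝ)) ≥ variance f μ * (R2_D - R2_d) := by
  rw [hMSED, hMSEd,
    key_mse μ x hx hx0 Sx hSx hSxinv f hf hf0 cx hcx,
    key_mse μ φ hφ hφ0 Sφ hSφ hSφinv f hf hf0 cφ hcφ, hR2D, hR2d]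
  have hV : variance f μ ≠ 0 := ne_of_gt hfvar
  have hkey : variance f μ * ((cx ⬝ᵥ (Sx⁻¹ *ᵥ cx)) / variance f μ
      - (cφ ⬝ᵥ (Sφ⁻¹ *ᵥ cφ)) / variance f μ)
      = cx ⬝ᵥ (Sx⁻¹ *ᵥ cx) - cφ ⬝ᵥ (Sφ⁻¹ *ᵥ cφ) := by
    field_simp
  rw [hkey]
  constructor <;> intro h <;> [skip; skip] <;> linarith
end

section
/- (Cancellation of the cross-terms when aggregating two tasks.) Let f_i, f_j : Ω → ℝ be square-integrable mean-zero random variables (the regression functions of the two tasks) and let ε̄ : Ω → ℝ be a square-integrable random variable with cov(φ k, ε̄) = 0 for every k (the averaged noise, uncorrelated with the features). Set ψ := (1/2) * (f_i + f_j) + ε̄, the averaged target. Then the sum over the two tasks of the asymptotic biases of the linear model trained on the averaged target satisfies E[ ( ∑_k w(ψ) k * φ k − f_i )² ] + E[ ( ∑_k w(ψ) k * φ k − f_j )² ] = Var(f_i) + Var(f_j) − 2 * ( c(ψ) ⬝ᵥ (Σ⁻¹ *ᵥ c(ψ)) ). -/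
open MeasureTheory ProbabilityTheory Matrix

lemma l2_mul_integrable {Ω : Type*} [MeasurableSpace Ω] {μ : Measure Ω} {X Y : Ω → ℝ}
    (hX : MemLp X 2 μ) (hY : MemLp Y 2 μ) : Integrable (fun ω => X ω * Y ω) μ := by
  rw [← memLp_one_iff_integrable]
  have h := hY.smul (p := 2) (q := 2) (r := 1) hX
  exact h

lemma cov_zero_mean {Ω : Type*} [MeasurableSpace Ω] (μ : Measure Ω) [IsProbabilityMeasure μ]
    {X Y : Ω → ℝ} (hX : MemLp X 2 μ) (hY : MemLp Y 2 μ) (hX0 : ∫ ω, X ω ∂μ = 0) :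
    cov μ X Y = ∫ ω, X ω * Y ω ∂μ := by
  unfold cov
  rw [hX0]
  have h : (fun ω => (X ω - 0) * (Y ω - ∫ x, Y x ∂μ)) =
      fun ω => X ω * Y ω - (∫ x, Y x ∂μ) * X ω := by funext ω; ring
  rw [h, integral_sub (l2_mul_integrable hX hY)
    ((hX.integrable one_le_two).const_mul _), integral_const_mul, hX0, mul_zero, sub_zero]

/-- Cancellation of the cross-terms when aggregating two tasks: with
`ψ = (1/2)(f_i + f_j) + ε̄` and the averaged noise `ε̄` uncorrelated with the features,
the sum over the two tasks of the asymptotic biases of the model trained on `ψ` is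
`Var(f_i) + Var(f_j) - 2 (c(ψ) ⬝ᵥ (Σ⁻¹ c(ψ)))`. -/
theorem cross_terms_cancellation {Ω : Type*} [MeasurableSpace Ω] (μ : Measure Ω)
    [IsProbabilityMeasure μ] {d : ℕ} (hd : 0 < d)
    (φ : Fin d → Ω → ℝ) (hφ : ∀ k, MemLp (φ k) 2 μ)
    (hφ0 : ∀ k, ∫ ω, φ k ω ∂μ = 0)
    (S : Matrix (Fin d) (Fin d) ℝ)
    (hS : ∀ k j, S k j = cov μ (φ k) (φ j))
    (hSinv : IsUnit S.det)
    (fi : Ω → ℝ) (hfi : MemLp fi 2 μ) (hfi0 : ∫ ω, fi ω ∂μ = 0)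
    (fj : Ω → ℝ) (hfj : MemLp fj 2 μ) (hfj0 : ∫ ω, fj ω ∂μ = 0)
    (εbar : Ω → ℝ) (hεbar : MemLp εbar 2 μ)
    (hεφ : ∀ k, cov μ (φ k) εbar = 0)
    (ψ : Ω → ℝ) (hψ : ∀ ω, ψ ω = (1 / 2) * (fi ω + fj ω) + εbar ω)
    (cψ : Fin d → ℝ) (hcψ : ∀ k, cψ k = cov μ (φ k) ψ)
    (wψ : Fin d → ℝ) (hwψ : wψ = S⁻¹ *ᵥ cψ) :
    (∫ ω, (∑ k, wψ k * φ k ω - fi ω) ^ 2 ∂μ)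
      + ∫ ω, (∑ k, wψ k * φ k ω - fj ω) ^ 2 ∂μ
      = variance fi μ + variance fj μ - 2 * (cψ ⬝ᵥ (S⁻¹ *ᵥ cψ)) := by
  -- the linear predictor
  set P : Ω → ℝ := fun ω => ∑ k, wψ k * φ k ω with hPdef
  have hP : MemLp P 2 μ :=
    memLp_finset_sum _ (fun k _ => (hφ k).const_mul (wψ k))
  have hψeq : ψ = fun ω => (1 / 2) * (fi ω + fj ω) + εbar ω := funext hψ
  have hψmem : MemLp ψ 2 μ := by
    rw [hψeq]; exact ((hfi.add hfj).const_mul _).add hεbar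
  -- componentwise covariances with fi, fj
  set ci : Fin d → ℝ := fun k => ∫ ω, φ k ω * fi ω ∂μ with hci
  set cj : Fin d → ℝ := fun k => ∫ ω, φ k ω * fj ω ∂μ with hcj
  have hck : ∀ k, cψ k = (1 / 2) * (ci k + cj k) := by
    intro k
    rw [hcψ k, cov_zero_mean μ (hφ k) hψmem (hφ0 k)]
    have h1 : (fun ω => φ k ω * ψ ω) = fun ω =>
        ((1 / 2) * (φ k ω * fi ω) + (1 / 2) * (φ k ω * fj ω)) + φ k ω * εbar ω := by
      funext ω; rw [hψ ω]; ring
    have hi1 : Integrable (fun ω => (1:ℝ) / 2 * (φ k ω * fi ω)) μ :=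
      (l2_mul_integrable (hφ k) hfi).const_mul _
    have hi2 : Integrable (fun ω => (1:ℝ) / 2 * (φ k ω * fj ω)) μ :=
      (l2_mul_integrable (hφ k) hfj).const_mul _
    have hi12 : Integrable (fun ω => (1:ℝ) / 2 * (φ k ω * fi ω) + 1 / 2 * (φ k ω * fj ω)) μ :=
      hi1.add hi2
    rw [h1, integral_add hi12 (l2_mul_integrable (hφ k) hεbar),
      integral_add hi1 hi2,
      integral_const_mul, integral_const_mul,
      ← cov_zero_mean μ (hφ k) hεbar (hφ0 k), hεφ k]
    ring
  -- the matrix entries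
  have hSint : ∀ k j, S k j = ∫ ω, φ k ω * φ j ω ∂μ := fun k j => by
    rw [hS k j, cov_zero_mean μ (hφ k) (hφ j) (hφ0 k)]
  -- S *ᵥ wψ = cψ
  have hSw : S *ᵥ wψ = cψ := by
    rw [hwψ, Matrix.mulVec_mulVec, Matrix.mul_nonsing_inv S hSinv, Matrix.one_mulVec]
  -- ∫ P ^ 2
  have hA : ∫ ω, P ω ^ 2 ∂μ = ∑ k, wψ k * cψ k := by
    have h1 : (fun ω => P ω ^ 2) =
        fun ω => ∑ k, ∑ j, wψ k * wψ j * (φ k ω * φ j ω) := by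
      funext ω
      rw [hPdef, sq, Finset.sum_mul_sum]
      exact Finset.sum_congr rfl fun k _ => Finset.sum_congr rfl fun j _ => by ring
    rw [h1, integral_finset_sum _ (fun k _ => integrable_finset_sum _
      (fun j _ => (l2_mul_integrable (hφ k) (hφ j)).const_mul _))]
    have h2 : ∀ k, (∫ ω, ∑ j, wψ k * wψ j * (φ k ω * φ j ω) ∂μ)
        = wψ k * ∑ j, S k j * wψ j := by
      intro k
      rw [integral_finset_sum _ (fun j _ => (l2_mul_integrable (hφ k) (hφ j)).const_mul _),
        Finset.mul_sum]
      exact Finset.sum_congr rfl fun j _ => by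
        rw [integral_const_mul, hSint k j]; ring
    rw [Finset.sum_congr rfl fun k _ => h2 k]
    exact Finset.sum_congr rfl fun k _ => by
      have := congrFun hSw k
      rw [Matrix.mulVec, dotProduct] at this
      rw [this]
  -- ∫ P * f
  have hB : ∀ (f : Ω → ℝ), MemLp f 2 μ →
      ∫ ω, P ω * f ω ∂μ = ∑ k, wψ k * ∫ ω, φ k ω * f ω ∂μ := by
    intro f hf
    have h1 : (fun ω => P ω * f ω) = fun ω => ∑ k, wψ k * (φ k ω * f ω) := by
      funext ω; rw [hPdef, Finset.sum_mul]
      exact Finset.sum_congr rfl fun k _ => by ring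
    rw [h1, integral_finset_sum _ (fun k _ => (l2_mul_integrable (hφ k) hf).const_mul _)]
    exact Finset.sum_congr rfl fun k _ => integral_const_mul _ _
  -- expansion of squared error
  have hexp : ∀ (f : Ω → ℝ), MemLp f 2 μ →
      ∫ ω, (P ω - f ω) ^ 2 ∂μ =
        (∫ ω, P ω ^ 2 ∂μ) - 2 * (∫ ω, P ω * f ω ∂μ) + ∫ ω, f ω ^ 2 ∂μ := by
    intro f hf
    have h1 : (fun ω => (P ω - f ω) ^ 2) =
        fun ω => (P ω ^ 2 - 2 * (P ω * f ω)) + f ω ^ 2 := by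
      funext ω; ring
    have hi1 : Integrable (fun ω => P ω ^ 2 - 2 * (P ω * f ω)) μ :=
      hP.integrable_sq.sub ((l2_mul_integrable hP hf).const_mul 2)
    have hi2 : Integrable (fun ω => 2 * (P ω * f ω)) μ :=
      (l2_mul_integrable hP hf).const_mul 2
    rw [h1, integral_add hi1 hf.integrable_sq, integral_sub hP.integrable_sq hi2,
      integral_const_mul]
  -- variances
  have hVi : variance fi μ = ∫ ω, fi ω ^ 2 ∂μ := by
    rw [variance_eq_sub hfi]
    simp only [Pi.pow_apply, hfi0]
    ring
  have hVj : variance fj μ = ∫ ω, fj ω ^ 2 ∂μ := by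
    rw [variance_eq_sub hfj]
    simp only [Pi.pow_apply, hfj0]
    ring
  -- the dot product on the RHS
  have hdot : cψ ⬝ᵥ (S⁻¹ *ᵥ cψ) = ∑ k, wψ k * cψ k := by
    rw [← hwψ, dotProduct]
    exact Finset.sum_congr rfl fun k _ => mul_comm _ _
  -- put everything together
  have key : ∑ k, wψ k * ci k + ∑ k, wψ k * cj k = 2 * ∑ k, wψ k * cψ k := by
    rw [← Finset.sum_add_distrib, Finset.mul_sum]
    exact Finset.sum_congr rfl fun k _ => by rw [hck k]; ring
  rw [hexp fi hfi, hexp fj hfj, hA, hB fi hfi, hB fj hfj, hVi, hVj, hdot]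
  rw [← hci, ← hcj] at *
  linarith [key]
end
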